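/- Let (S,+) be a commutative semigroup. Every piecewise syndetic subset A ⊆ S is a J-set: for every finite nonempty set F of sequences f : ℕ → S there exist a ∈ S and a finite nonempty H ⊆ ℕ such that a + Σ_{t∈H} f(t) ∈ A for all f ∈ F. -/

import Mathlib

/-- `A` is thick: every finite nonempty set can be right-translated into `A`. -/
def Thick {S : Type*} [Semigroup S] (A : Set S) : Prop :=
  ∀ E : Finset S, E.Nonempty → ∃ x : S, ∀ e ∈ E, e * x ∈ A

def Syndetic {S : Type*} [Semigroup S] (A : Set S) : Prop :=
  ∃ F : Finset S, F.Nonempty ∧ ∀ s : S, ∃ t ∈ F, t * s ∈ A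

def PiecewiseSyndetic {S : Type*} [Semigroup S] (A : Set S) : Prop :=
  ∃ F : Finset S, F.Nonempty ∧ Thick {s : S | ∃ t ∈ F, t * s ∈ A}

def ThickAdd {S : Type*} [AddSemigroup S] (A : Set S) : Prop :=
  ∀ E : Finset S, E.Nonempty → ∃ x : S, ∀ e ∈ E, e + x ∈ A

def SyndeticAdd {S : Type*} [AddSemigroup S] (A : Set S) : Prop :=
  ∃ F : Finset S, F.Nonempty ∧ ∀ s : S, ∃ t ∈ F, t + s ∈ A

def PiecewiseSyndeticAdd {S : Type*} [AddSemigroup S] (A : Set S) : Prop :=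
  ∃ F : Finset S, F.Nonempty ∧ ThickAdd {s : S | ∃ t ∈ F, t + s ∈ A}

/-- Sum of `f t` over a nonempty finite `H ⊆ ℕ` in a commutative semigroup
(junk value `f 0` when `H = ∅`). -/
def fSum {S : Type*} [AddCommSemigroup S] (H : Finset ℕ) (f : ℕ → S) : S :=
  match Finset.sort H (· ≤ ·) with
  | [] => f 0
  | a :: l => l.foldl (fun s t => s + f t) (f a)

/-- `J`-set in a commutative semigroup. -/
def JSetAdd {S : Type*} [AddCommSemigroup S] (A : Set S) : Prop :=
  ∀ F : Finset (ℕ → S), F.Nonempty →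
    ∃ (a : S) (H : Finset ℕ), H.Nonempty ∧ ∀ f ∈ F, a + fSum H f ∈ A

/-- `x(m,a,t,f) = a(0)·f(t 0)·a(1)·f(t 1)⋯f(t (m-1))·a(m)` (0-indexed version of
`(∏_{j=1}^m a(j)·f(t(j)))·a(m+1)`). -/
def xNC {S : Type*} [Semigroup S] (m : ℕ) (a : ℕ → S) (t : ℕ → ℕ) (f : ℕ → S) : S :=
  (List.range m).foldl (fun s j => s * f (t j) * a (j + 1)) (a 0)

/-- `J`-set in a not-necessarily-commutative semigroup. -/
def JSetNC {S : Type*} [Semigroup S] (A : Set S) : Prop :=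
  ∀ G : Finset (ℕ → S), G.Nonempty →
    ∃ (m : ℕ) (a : ℕ → S) (t : ℕ → ℕ), 1 ≤ m ∧
      (∀ i j : ℕ, i < j → j < m → t i < t j) ∧
      ∀ f ∈ G, xNC m a t f ∈ A

/-- `v 0 + v 1 + ⋯ + v r` in an additive semigroup. -/
def seqSum {S : Type*} [AddSemigroup S] (v : ℕ → S) (r : ℕ) : S :=
  (List.range r).foldl (fun s j => s + v (j + 1)) (v 0)

/-- `v 0 * v 1 * ⋯ * v r` in a semigroup. -/
def seqProd {S : Type*} [Semigroup S] (v : ℕ → S) (r : ℕ) : S :=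
  (List.range r).foldl (fun s j => s * v (j + 1)) (v 0)

/-- Collectionwise piecewise syndetic family (multiplicative). -/
def CollectionwisePS {S : Type*} [Semigroup S] (𝒜 : Set (Set S)) : Prop :=
  ∃ (G : Finset (Set S) → Finset S) (x : Finset (Set S) → Finset S → S),
    ∀ (F : Finset S) (ℱ ℋ : Finset (Set S)), ℱ.Nonempty → ↑ℋ ⊆ 𝒜 → ℱ ⊆ ℋ →
      ∀ y ∈ F, ∃ t ∈ G ℱ, t * (y * x ℋ F) ∈ ⋂₀ (ℱ : Set (Set S))

/-- Collectionwise piecewise syndetic family (additive). -/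
def CollectionwisePSAdd {S : Type*} [AddSemigroup S] (𝒜 : Set (Set S)) : Prop :=
  ∃ (G : Finset (Set S) → Finset S) (x : Finset (Set S) → Finset S → S),
    ∀ (F : Finset S) (ℱ ℋ : Finset (Set S)), ℱ.Nonempty → ↑ℋ ⊆ 𝒜 → ℱ ⊆ ℋ →
      ∀ y ∈ F, ∃ t ∈ G ℱ, t + (y + x ℋ F) ∈ ⋂₀ (ℱ : Set (Set S))

/-- Central set (multiplicative), via the combinatorial characterization. -/
def Central {S : Type*} [Semigroup S] (A : Set S) : Prop :=
  ∃ (I : Type) (C : I → Set S), Nonempty I ∧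
    (∀ N, C N ⊆ A) ∧
    (∀ N M : I, ∃ P : I, C P ⊆ C N ∧ C P ⊆ C M) ∧
    (∀ N : I, ∀ y ∈ C N, ∃ M : I, C M ⊆ {s : S | y * s ∈ C N}) ∧
    CollectionwisePS {B : Set S | ∃ N : I, B = C N}

/-- Central set (additive), via the combinatorial characterization. -/
def CentralAdd {S : Type*} [AddSemigroup S] (A : Set S) : Prop :=
  ∃ (I : Type) (C : I → Set S), Nonempty I ∧
    (∀ N, C N ⊆ A) ∧
    (∀ N M : I, ∃ P : I, C P ⊆ C N ∧ C P ⊆ C M) ∧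
    (∀ N : I, ∀ y ∈ C N, ∃ M : I, C M ⊆ {s : S | y + s ∈ C N}) ∧
    CollectionwisePSAdd {B : Set S | ∃ N : I, B = C N}


section Aux

variable {S : Type*} [AddCommSemigroup S]

/-- The monoid obtained by adjoining an identity to `S`. -/
abbrev PWSJ.M (S : Type*) [AddCommSemigroup S] : Type _ :=
  Additive (WithOne (Multiplicative S))

namespace PWSJ

noncomputable instance : AddCommMonoid (M S) := inferInstance

def emb (s : S) : M S := Additive.ofMul (WithOne.coe (Multiplicative.ofAdd s))

lemma emb_add (a b : S) : emb (a + b) = emb a + emb b := by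
  show Additive.ofMul ((Multiplicative.ofAdd (a+b) : Multiplicative S) : WithOne (Multiplicative S)) = _
  rw [ofAdd_add]
  rw [show ((Multiplicative.ofAdd a * Multiplicative.ofAdd b : Multiplicative S) : WithOne (Multiplicative S)) = (Multiplicative.ofAdd a : Multiplicative S) * (Multiplicative.ofAdd b : Multiplicative S) from WithOne.coe_mul _ _]
  rfl

lemma emb_injective : Function.Injective (emb (S := S)) := by
  intro a b h
  have := WithOne.coe_inj.mp (Additive.ofMul.injective h)
  exact Multiplicative.ofAdd.injective this

lemma emb_foldl (f : ℕ → S) : ∀ (l : List ℕ) (s : S),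
    emb (l.foldl (fun s t => s + f t) s) = emb s + (l.map (fun t => emb (f t))).sum := by
  intro l
  induction l with
  | nil => intro s; simp
  | cons b l ih =>
    intro s
    simp only [List.foldl_cons, List.map_cons, List.sum_cons, ih, emb_add, add_assoc]

lemma emb_fSum (H : Finset ℕ) (hH : H.Nonempty) (f : ℕ → S) :
    emb (fSum H f) = ∑ t ∈ H, emb (f t) := by
  unfold fSum
  have hlen : (Finset.sort H (· ≤ ·)) ≠ [] := by
    intro h
    have := Finset.length_sort (α := ℕ) (· ≤ ·) (s := H)
    rw [h] at this
    simp at this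
    exact hH.ne_empty (Finset.card_eq_zero.mp this.symm)
  have hperm : ((Finset.sort H (· ≤ ·)).map (fun t => emb (f t))).Perm (H.toList.map (fun t => emb (f t))) :=
    (Finset.sort_perm_toList H _).map _
  have hsum : ((Finset.sort H (· ≤ ·)).map (fun t => emb (f t))).sum = ∑ t ∈ H, emb (f t) := by
    rw [hperm.sum_eq, Finset.sum_map_toList]
  cases h : Finset.sort H (· ≤ ·) with
  | nil => exact absurd h hlen
  | cons a l =>
    rw [emb_foldl]
    rw [← hsum, h]
    simp

lemma exists_emb_sum {β : Type*} (s : Finset β) (g : β → S) (hs : s.Nonempty) :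
    ∃ y : S, ∑ b ∈ s, emb (g b) = emb y := by
  induction hs using Finset.Nonempty.cons_induction with
  | singleton a => exact ⟨g a, by simp⟩
  | cons a s ha hs ih =>
    obtain ⟨y, hy⟩ := ih
    exact ⟨g a + y, by rw [Finset.sum_cons, hy, emb_add]⟩

end PWSJ

end Aux

/-- in a commutative semigroup, every piecewise syndetic set is a
`J`-set. -/
theorem piecewiseSyndeticAdd_jSet {S : Type*} [AddCommSemigroup S] (A : Set S)
    (hA : PiecewiseSyndeticAdd A) :
    ∀ F : Finset (ℕ → S), F.Nonempty →
      ∃ (a : S) (H : Finset ℕ), H.Nonempty ∧ ∀ f ∈ F, a + fSum H f ∈ A := by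
  classical
  obtain ⟨F, hFne, hThick⟩ := hA
  intro 𝔉 h𝔉
  haveI : Nonempty ↥F := ⟨⟨hFne.choose, hFne.choose_spec⟩⟩
  haveI : Nonempty {f // f ∈ 𝔉} := ⟨⟨h𝔉.choose, h𝔉.choose_spec⟩⟩
  obtain ⟨ι, _inst, hHJ⟩ :=
    Combinatorics.Line.exists_mono_in_high_dimension {f // f ∈ 𝔉} ↥F
  haveI : Nonempty ι := by
    obtain ⟨l, -⟩ := hHJ fun _ => Classical.arbitrary ↥F
    obtain ⟨i, -⟩ := l.proper
    exact ⟨i⟩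
  set pos : ι → ℕ := fun i => ((Fintype.equivFin ι) i : ℕ) with hpos
  have hposinj : Function.Injective pos := fun i j h =>
    (Fintype.equivFin ι).injective (Fin.val_injective h)
  set σ : (ι → {f // f ∈ 𝔉}) → PWSJ.M S :=
    fun w => ∑ i, PWSJ.emb ((w i : ℕ → S) (pos i)) with hσdef
  have hσ : ∀ w, ∃ y : S, σ w = PWSJ.emb y := fun w =>
    PWSJ.exists_emb_sum _ _ Finset.univ_nonempty
  choose sval hsval using hσ
  obtain ⟨x, hx⟩ := hThick (Finset.univ.image sval)
    (Finset.Nonempty.image Finset.univ_nonempty _)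
  have key : ∀ w, ∃ t : ↥F, (t : S) + (sval w + x) ∈ A := by
    intro w
    obtain ⟨t, htF, ht⟩ := hx (sval w) (Finset.mem_image_of_mem _ (Finset.mem_univ w))
    exact ⟨⟨t, htF⟩, ht⟩
  choose C hC using key
  obtain ⟨l, c, hl⟩ := hHJ C
  set H₀ : Finset ι := Finset.univ.filter (fun i => l.idxFun i = none) with hH₀
  have hH₀ne : H₀.Nonempty := by
    obtain ⟨i, hi⟩ := l.proper
    exact ⟨i, by simp [hH₀, hi]⟩
  set H : Finset ℕ := H₀.image pos with hHdef
  have hHne : H.Nonempty := hH₀ne.image _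
  set g₀ : {f // f ∈ 𝔉} := Classical.arbitrary _ with hg₀
  have hfsum : ∀ g : {f // f ∈ 𝔉},
      PWSJ.emb (fSum H (g : ℕ → S)) = ∑ i ∈ H₀, PWSJ.emb ((g : ℕ → S) (pos i)) := by
    intro g
    rw [PWSJ.emb_fSum H hHne]
    exact Finset.sum_image fun i _ j _ h => hposinj h
  have hsplit : ∀ g : {f // f ∈ 𝔉}, σ (l g) =
      (∑ i ∈ H₀ᶜ, PWSJ.emb ((((l.idxFun i).getD g₀ : {f // f ∈ 𝔉}) : ℕ → S) (pos i)))
        + PWSJ.emb (fSum H (g : ℕ → S)) := by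
    intro g
    rw [hfsum, hσdef]
    dsimp only
    rw [← Finset.sum_compl_add_sum H₀]
    congr 1
    · refine Finset.sum_congr rfl fun i hi => ?_
      have hi' : l.idxFun i ≠ none := by
        simp only [Finset.mem_compl, hH₀, Finset.mem_filter, Finset.mem_univ,
          true_and] at hi
        exact hi
      obtain ⟨a, ha⟩ := Option.ne_none_iff_exists'.mp hi'
      show PWSJ.emb ((((l.idxFun i).getD g : {f // f ∈ 𝔉}) : ℕ → S) (pos i)) = _
      rw [ha]
      simp
    · refine Finset.sum_congr rfl fun i hi => ?_
      have hi' : l.idxFun i = none := by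
        simp only [hH₀, Finset.mem_filter, Finset.mem_univ, true_and] at hi
        exact hi
      show PWSJ.emb ((((l.idxFun i).getD g : {f // f ∈ 𝔉}) : ℕ → S) (pos i)) = _
      rw [hi']
      simp
  rcases Finset.eq_empty_or_nonempty H₀ᶜ with hcompl | hcompl
  · refine ⟨(c : S) + x, H, hHne, ?_⟩
    intro f hf
    have h1 : σ (l ⟨f, hf⟩) = PWSJ.emb (fSum H f) := by
      rw [hsplit ⟨f, hf⟩, hcompl, Finset.sum_empty, zero_add]
    have h2 : sval (l ⟨f, hf⟩) = fSum H f :=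
      PWSJ.emb_injective ((hsval _).symm.trans h1)
    have h3 := hC (l ⟨f, hf⟩)
    rw [hl ⟨f, hf⟩, h2] at h3
    have heq : ((c : S) + x) + fSum H f = (c : S) + (fSum H f + x) := by
      rw [add_assoc, add_comm x]
    rwa [heq]
  · obtain ⟨y₀, hy₀⟩ := PWSJ.exists_emb_sum H₀ᶜ
      (fun i => (((l.idxFun i).getD g₀ : {f // f ∈ 𝔉}) : ℕ → S) (pos i)) hcompl
    refine ⟨(c : S) + (y₀ + x), H, hHne, ?_⟩
    intro f hf
    have h1 : σ (l ⟨f, hf⟩) = PWSJ.emb (y₀ + fSum H f) := by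
      rw [hsplit ⟨f, hf⟩, hy₀, PWSJ.emb_add]
    have h2 : sval (l ⟨f, hf⟩) = y₀ + fSum H f :=
      PWSJ.emb_injective ((hsval _).symm.trans h1)
    have h3 := hC (l ⟨f, hf⟩)
    rw [hl ⟨f, hf⟩, h2] at h3
    have heq : ((c : S) + (y₀ + x)) + fSum H f = (c : S) + ((y₀ + fSum H f) + x) := by
      rw [add_assoc, add_right_comm y₀ x (fSum H f)]
    rwa [heq]
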